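/- For every integer k ≥ 3, if k is even then the graph Γ_k can be partitioned into k vertex-disjoint copies of K_k, and if k is odd then Γ_k cannot be so partitioned. -/

import Mathlib

/-- The graph `Γ_k` on vertices `h_{i,j}`, `i, j ∈ Fin k` (0-indexed):
`h_{i,j} ~ h_{i',j'}` iff `i ≠ i'`, `j ≠ j'` and one of `j, j'` is `< k - 2`;
additionally `h_{i,j} ~ h_{i',j}` for `i ≠ i'` whenever `j ≥ k - 2`. -/
def gammaGraph (k : ℕ) : SimpleGraph (Fin k × Fin k) where
  Adj p q := p.1 ≠ q.1 ∧
    ((p.2 ≠ q.2 ∧ (p.2.val < k - 2 ∨ q.2.val < k - 2)) ∨ (p.2 = q.2 ∧ k - 2 ≤ p.2.val))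
  symm := by
    constructor
    rintro p q ⟨h1, h2⟩
    refine ⟨h1.symm, ?_⟩
    rcases h2 with ⟨hne, hor⟩ | ⟨heq, hge⟩
    · exact Or.inl ⟨hne.symm, hor.symm⟩
    · exact Or.inr ⟨heq.symm, heq ▸ hge⟩
  loopless := ⟨fun _ h => h.1 rfl⟩

namespace GammaAux

/-- column value of row `i` in clique `t` -/
def Acol (k : ℕ) (hk : 3 ≤ k) (t i : Fin k) : Fin k :=
  if (t.val + i.val) % k < k - 2 then ⟨(t.val + i.val) % k, Nat.mod_lt _ (by omega)⟩
  else if t.val % 2 = 0 then ⟨k - 1, by omega⟩ else ⟨k - 2, by omega⟩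

lemma add_mod_cancel {k a b : ℕ} (c : ℕ) (ha : a < k) (hb : b < k)
    (h : (a + c) % k = (b + c) % k) : a = b := by
  have h2 : a % k = b % k := Nat.ModEq.add_right_cancel' c h
  rwa [Nat.mod_eq_of_lt ha, Nat.mod_eq_of_lt hb] at h2

lemma Acol_inj (k : ℕ) (hk : 3 ≤ k) (hke : Even k) {i t t' : Fin k}
    (h : Acol k hk t i = Acol k hk t' i) : t = t' := by
  have hk2 : 2 ∣ k := hke.two_dvd
  have hk0 : 0 < k := by omega
  unfold Acol at h
  by_cases h1 : (t.val + i.val) % k < k - 2 <;>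
    by_cases h2 : (t'.val + i.val) % k < k - 2
  · rw [if_pos h1, if_pos h2] at h
    have := congrArg Fin.val h
    exact Fin.ext (add_mod_cancel i.val t.isLt t'.isLt this)
  · rw [if_pos h1, if_neg h2] at h
    have := congrArg Fin.val h
    split_ifs at this <;> simp at this <;> omega
  · rw [if_neg h1, if_pos h2] at h
    have := congrArg Fin.val h
    split_ifs at this <;> simp at this <;> omega
  · rw [if_neg h1, if_neg h2] at h
    have hv := congrArg Fin.val h
    have hp : t.val % 2 = t'.val % 2 := by
      split_ifs at hv <;> simp at hv <;> omega
    have e3 : ((t.val + i.val) % k) % 2 = (t.val + i.val) % 2 :=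
      Nat.mod_mod_of_dvd _ hk2
    have e3' : ((t'.val + i.val) % k) % 2 = (t'.val + i.val) % 2 :=
      Nat.mod_mod_of_dvd _ hk2
    have hlt : (t.val + i.val) % k < k := Nat.mod_lt _ hk0
    have hlt' : (t'.val + i.val) % k < k := Nat.mod_lt _ hk0
    obtain ⟨m, hm⟩ := hke
    have heq : (t.val + i.val) % k = (t'.val + i.val) % k := by omega
    exact Fin.ext (add_mod_cancel i.val t.isLt t'.isLt heq)

/-- there is a `t` of each parity hitting the "large" residues at column `i` -/
lemma exists_parity (k : ℕ) (hk : 3 ≤ k) (hke : Even k) (i : Fin k) (p : ℕ) (hp : p < 2) :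
    ∃ t : Fin k, t.val % 2 = p ∧ ¬ ((t.val + i.val) % k < k - 2) := by
  obtain ⟨m, hm⟩ := hke
  have hk0 : 0 < k := by omega
  have hi : i.val < k := i.isLt
  -- candidates: (k-2 + k - i) % k and (k-1 + k - i) % k
  have key : ∀ j : ℕ, k - 2 ≤ j → j < k → ((j + k - i.val) % k + i.val) % k = j := by
    intro j hj1 hj2
    have h1 : (j + k - i.val) + i.val = j + k := by omega
    rw [Nat.mod_add_mod, h1, Nat.add_mod_right, Nat.mod_eq_of_lt hj2]
  set a := (k - 2 + k - i.val) % k with ha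
  set b := (k - 1 + k - i.val) % k with hb
  have hak : a < k := Nat.mod_lt _ hk0
  have hbk : b < k := Nat.mod_lt _ hk0
  have hares : (a + i.val) % k = k - 2 := by
    have := key (k - 2) le_rfl (by omega)
    simpa [ha] using this
  have hbres : (b + i.val) % k = k - 1 := by
    have := key (k - 1) (by omega) (by omega)
    simpa [hb] using this
  have hpar : a % 2 ≠ b % 2 := by
    have e1 : a % 2 = (k - 2 + k - i.val) % 2 := Nat.mod_mod_of_dvd _ ⟨m, by omega⟩
    have e2 : b % 2 = (k - 1 + k - i.val) % 2 := Nat.mod_mod_of_dvd _ ⟨m, by omega⟩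
    omega
  interval_cases p
  · by_cases hc : a % 2 = 0
    · exact ⟨⟨a, hak⟩, hc, show ¬ ((a + i.val) % k < k - 2) by omega⟩
    · exact ⟨⟨b, hbk⟩, show b % 2 = 0 by omega,
        show ¬ ((b + i.val) % k < k - 2) by omega⟩
  · by_cases hc : a % 2 = 1
    · exact ⟨⟨a, hak⟩, hc, show ¬ ((a + i.val) % k < k - 2) by omega⟩
    · exact ⟨⟨b, hbk⟩, show b % 2 = 1 by omega,
        show ¬ ((b + i.val) % k < k - 2) by omega⟩

lemma Acol_surj (k : ℕ) (hk : 3 ≤ k) (hke : Even k) (i j : Fin k) :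
    ∃ t, Acol k hk t i = j := by
  have hk0 : 0 < k := by omega
  by_cases hj : j.val < k - 2
  · refine ⟨⟨(j.val + k - i.val) % k, Nat.mod_lt _ hk0⟩, ?_⟩
    have h1 : ((j.val + k - i.val) % k + i.val) % k = j.val := by
      have h2 : (j.val + k - i.val) + i.val = j.val + k := by
        have := i.isLt; omega
      rw [Nat.mod_add_mod, h2, Nat.add_mod_right, Nat.mod_eq_of_lt j.isLt]
    unfold Acol
    rw [if_pos (by simpa [h1] using hj)]
    exact Fin.ext (by simp [h1])
  · have hjv : j.val = k - 2 ∨ j.val = k - 1 := by have := j.isLt; omega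
    rcases hjv with hjv | hjv
    · obtain ⟨t, ht1, ht2⟩ := exists_parity k hk hke i 1 (by omega)
      refine ⟨t, ?_⟩
      unfold Acol
      rw [if_neg ht2, if_neg (by omega)]
      exact Fin.ext (by simp [hjv])
    · obtain ⟨t, ht1, ht2⟩ := exists_parity k hk hke i 0 (by omega)
      refine ⟨t, ?_⟩
      unfold Acol
      rw [if_neg ht2, if_pos ht1]
      exact Fin.ext (by simp [hjv])

lemma Acol_adj (k : ℕ) (hk : 3 ≤ k) (t : Fin k) {i i' : Fin k} (hne : i ≠ i') :
    (gammaGraph k).Adj (i, Acol k hk t i) (i', Acol k hk t i') := by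
  refine ⟨hne, ?_⟩
  unfold Acol
  by_cases h1 : (t.val + i.val) % k < k - 2 <;>
    by_cases h2 : (t.val + i'.val) % k < k - 2
  · rw [if_pos h1, if_pos h2]
    refine Or.inl ⟨?_, Or.inl (by simpa using h1)⟩
    intro hcon
    have := congrArg Fin.val hcon
    simp at this
    exact hne (Fin.ext (add_mod_cancel t.val i.isLt i'.isLt
      (by rw [Nat.add_comm i.val, Nat.add_comm i'.val]; exact this)))
  · rw [if_pos h1, if_neg h2]
    refine Or.inl ⟨?_, Or.inl (by simpa using h1)⟩
    intro hcon
    have := congrArg Fin.val hcon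
    split_ifs at this <;> simp at this <;> omega
  · rw [if_neg h1, if_pos h2]
    refine Or.inl ⟨?_, Or.inr (by simpa using h2)⟩
    intro hcon
    have := congrArg Fin.val hcon
    split_ifs at this <;> simp at this <;> omega
  · rw [if_neg h1, if_neg h2]
    split_ifs with hpar
    · exact Or.inr ⟨rfl, show k - 2 ≤ k - 1 by omega⟩
    · exact Or.inr ⟨rfl, show k - 2 ≤ k - 2 by omega⟩

/-- the clique indexed by `t` -/
def cliq (k : ℕ) (hk : 3 ≤ k) (t : Fin k) : Finset (Fin k × Fin k) :=
  Finset.univ.image (fun i => (i, Acol k hk t i))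

lemma mem_cliq {k : ℕ} {hk : 3 ≤ k} {t : Fin k} {v : Fin k × Fin k} :
    v ∈ cliq k hk t ↔ v.2 = Acol k hk t v.1 := by
  constructor
  · rintro hv
    simp only [cliq, Finset.mem_image, Finset.mem_univ, true_and] at hv
    obtain ⟨i, hi⟩ := hv
    rw [← hi]
  · intro hv
    simp only [cliq, Finset.mem_image, Finset.mem_univ, true_and]
    exact ⟨v.1, by rw [← hv]⟩

lemma cliq_card (k : ℕ) (hk : 3 ≤ k) (t : Fin k) : (cliq k hk t).card = k := by
  rw [cliq, Finset.card_image_of_injective _ (fun a b h => by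
    simpa using congrArg Prod.fst h)]
  simp

lemma cliq_isNClique (k : ℕ) (hk : 3 ≤ k) (t : Fin k) :
    (gammaGraph k).IsNClique k (cliq k hk t) := by
  constructor
  · intro u hu v hv huv
    rw [Finset.mem_coe, mem_cliq] at hu hv
    have h1 : u.1 ≠ v.1 := by
      intro hcon
      exact huv (Prod.ext hcon (by rw [hu, hv, hcon]))
    have := Acol_adj k hk t h1
    rwa [← hu, ← hv, Prod.mk.eta, Prod.mk.eta] at this
  · exact cliq_card k hk t

/-- the even-k partition -/
lemma even_part (k : ℕ) (hk : 3 ≤ k) (hke : Even k) :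
    ∃ P : Finset (Finset (Fin k × Fin k)), P.card = k ∧
      (∀ s ∈ P, (gammaGraph k).IsNClique k s) ∧
      (P : Set (Finset (Fin k × Fin k))).PairwiseDisjoint id ∧
      ∀ v : Fin k × Fin k, ∃ s ∈ P, v ∈ s := by
  have hk0 : 0 < k := by omega
  refine ⟨Finset.univ.image (cliq k hk), ?_, ?_, ?_, ?_⟩
  · rw [Finset.card_image_of_injective]
    · simp
    · intro t t' h
      have h0 : ((⟨0, hk0⟩ : Fin k), Acol k hk t ⟨0, hk0⟩) ∈ cliq k hk t := mem_cliq.mpr rfl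
      rw [h] at h0
      exact Acol_inj k hk hke (show Acol k hk t ⟨0, hk0⟩ = Acol k hk t' ⟨0, hk0⟩ from mem_cliq.mp h0)
  · intro s hs
    simp only [Finset.mem_image, Finset.mem_univ, true_and] at hs
    obtain ⟨t, rfl⟩ := hs
    exact cliq_isNClique k hk t
  · intro a ha b hb hab
    simp only [Finset.coe_image, Finset.coe_univ, Set.image_univ, Set.mem_range] at ha hb
    obtain ⟨t, rfl⟩ := ha
    obtain ⟨t', rfl⟩ := hb
    refine Finset.disjoint_left.mpr fun v hv hv' => ?_
    simp only [id_eq] at hv hv'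
    rw [mem_cliq] at hv hv'
    exact hab (by rw [Acol_inj k hk hke (hv ▸ hv' : Acol k hk t v.1 = Acol k hk t' v.1)])
  · intro v
    obtain ⟨t, ht⟩ := Acol_surj k hk hke v.1 v.2
    exact ⟨cliq k hk t, Finset.mem_image_of_mem _ (Finset.mem_univ t), mem_cliq.mpr ht.symm⟩

/-- the odd-k impossibility -/
lemma odd_part (k : ℕ) (hk : 3 ≤ k) (hko : Odd k) :
    ¬ ∃ P : Finset (Finset (Fin k × Fin k)), P.card = k ∧
      (∀ s ∈ P, (gammaGraph k).IsNClique k s) ∧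
      (P : Set (Finset (Fin k × Fin k))).PairwiseDisjoint id ∧
      ∀ v : Fin k × Fin k, ∃ s ∈ P, v ∈ s := by
  rintro ⟨P, hcard, hcliq, hdisj, hcover⟩
  set jA : Fin k := ⟨k - 2, by omega⟩ with hjA
  set jB : Fin k := ⟨k - 1, by omega⟩ with hjB
  have hjAB : jA ≠ jB := by
    intro h
    have := congrArg Fin.val h
    simp [hjA, hjB] at this
    omega
  -- column sum: each column is partitioned by the cliques
  have colsum : ∀ j : Fin k, ∑ s ∈ P, (s.filter (fun v => v.2 = j)).card = k := by
    intro j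
    have hcol : (Finset.univ.filter (fun v : Fin k × Fin k => v.2 = j)) =
        P.biUnion (fun s => s.filter (fun v => v.2 = j)) := by
      ext v
      rw [Finset.mem_filter, Finset.mem_biUnion]
      constructor
      · intro hv
        obtain ⟨s, hs, hvs⟩ := hcover v
        exact ⟨s, hs, Finset.mem_filter.mpr ⟨hvs, hv.2⟩⟩
      · rintro ⟨s, _, hvs⟩
        exact ⟨Finset.mem_univ v, (Finset.mem_filter.mp hvs).2⟩
    have hdisj2 : ∀ s ∈ P, ∀ t ∈ P, s ≠ t →
        Disjoint (s.filter (fun v => v.2 = j)) (t.filter (fun v => v.2 = j)) := by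
      intro s hs t ht hst
      exact Finset.disjoint_filter_filter (hdisj hs ht hst)
    have h1 := Finset.card_biUnion hdisj2
    have h2 : (Finset.univ.filter (fun v : Fin k × Fin k => v.2 = j)).card = k := by
      have him : (Finset.univ.filter (fun v : Fin k × Fin k => v.2 = j)) =
          Finset.univ.image (fun i : Fin k => (i, j)) := by
        ext v
        rw [Finset.mem_filter, Finset.mem_image]
        constructor
        · intro hv
          exact ⟨v.1, Finset.mem_univ _, Prod.ext rfl hv.2.symm⟩
        · rintro ⟨i, -, rfl⟩
          exact ⟨Finset.mem_univ _, rfl⟩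
      rw [him, Finset.card_image_of_injective _ (fun a b h => by
        simpa using congrArg Prod.fst h)]
      simp
    rw [hcol, h1] at h2
    exact h2
  -- for each clique: at most one vertex per small column
  have small : ∀ s ∈ P, ∀ j : Fin k, j.val < k - 2 →
      (s.filter (fun v => v.2 = j)).card ≤ 1 := by
    intro s hs j hj
    refine Finset.card_le_one.mpr fun a ha b hb => ?_
    rw [Finset.mem_filter] at ha hb
    by_contra hab
    have hadj := (hcliq s hs).1 ha.1 hb.1 hab
    rcases hadj.2 with ⟨hne, _⟩ | ⟨_, hge⟩
    · exact hne (ha.2.trans hb.2.symm)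
    · rw [ha.2] at hge; omega
  -- a clique cannot meet both special columns
  have notboth : ∀ s ∈ P, (s.filter (fun v => v.2 = jA)).card = 0 ∨
      (s.filter (fun v => v.2 = jB)).card = 0 := by
    intro s hs
    by_contra hcon
    push_neg at hcon
    obtain ⟨a, ha⟩ := Finset.card_pos.mp (Nat.pos_of_ne_zero hcon.1)
    obtain ⟨b, hb⟩ := Finset.card_pos.mp (Nat.pos_of_ne_zero hcon.2)
    rw [Finset.mem_filter] at ha hb
    have hab : a ≠ b := fun h => hjAB (ha.2 ▸ hb.2 ▸ congrArg Prod.snd h)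
    have hadj := (hcliq s hs).1 ha.1 hb.1 hab
    rcases hadj.2 with ⟨_, hlt⟩ | ⟨heq, _⟩
    · rcases hlt with h | h
      · rw [ha.2] at h; simp [hjA] at h
      · rw [hb.2] at h; simp [hjB] at h; omega
    · exact hjAB (ha.2 ▸ hb.2 ▸ heq)
  -- each clique has at least 2 vertices in the special columns
  have geq2 : ∀ s ∈ P, 2 ≤ (s.filter (fun v => v.2 = jA)).card +
      (s.filter (fun v => v.2 = jB)).card := by
    intro s hs
    have hfib : s.card = ∑ j : Fin k, (s.filter (fun v => v.2 = j)).card :=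
      Finset.card_eq_sum_card_fiberwise (fun x _ => Finset.mem_univ x.2)
    have hsplit : (Finset.univ : Finset (Fin k)) =
        (Finset.univ.filter (fun j : Fin k => j.val < k - 2)) ∪ {jA, jB} := by
      ext j
      simp only [Finset.mem_univ, true_iff, Finset.mem_union, Finset.mem_filter,
        Finset.mem_insert, Finset.mem_singleton]
      by_cases hj : j.val < k - 2
      · exact Or.inl ⟨trivial, hj⟩
      · refine Or.inr ?_
        have hjlt := j.isLt
        rcases Nat.lt_or_ge j.val (k - 1) with h | h
        · exact Or.inl (Fin.ext (show j.val = k - 2 by omega))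
        · exact Or.inr (Fin.ext (show j.val = k - 1 by omega))
    have hdisjsets : Disjoint (Finset.univ.filter (fun j : Fin k => j.val < k - 2))
        ({jA, jB} : Finset (Fin k)) := by
      rw [Finset.disjoint_left]
      intro j hj hj2
      rw [Finset.mem_filter] at hj
      rw [Finset.mem_insert, Finset.mem_singleton] at hj2
      rcases hj2 with rfl | rfl
      · have h2 : k - 2 < k - 2 := hj.2
        omega
      · have h2 : k - 1 < k - 2 := hj.2
        omega
    have hsum : s.card = (∑ j ∈ Finset.univ.filter (fun j : Fin k => j.val < k - 2),
        (s.filter (fun v => v.2 = j)).card) +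
        (∑ j ∈ ({jA, jB} : Finset (Fin k)), (s.filter (fun v => v.2 = j)).card) := by
      rw [hfib, ← Finset.sum_union hdisjsets, ← hsplit]
    have hpair : (∑ j ∈ ({jA, jB} : Finset (Fin k)), (s.filter (fun v => v.2 = j)).card)
        = (s.filter (fun v => v.2 = jA)).card + (s.filter (fun v => v.2 = jB)).card := by
      rw [Finset.sum_pair hjAB]
    have hsmallsum : (∑ j ∈ Finset.univ.filter (fun j : Fin k => j.val < k - 2),
        (s.filter (fun v => v.2 = j)).card) ≤ k - 2 := by
      calc (∑ j ∈ Finset.univ.filter (fun j : Fin k => j.val < k - 2),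
          (s.filter (fun v => v.2 = j)).card)
          ≤ ∑ _j ∈ Finset.univ.filter (fun j : Fin k => j.val < k - 2), 1 :=
            Finset.sum_le_sum (fun j hj => small s hs j (Finset.mem_filter.mp hj).2)
        _ = (Finset.univ.filter (fun j : Fin k => j.val < k - 2)).card := by simp
        _ ≤ k - 2 := by
            have : (Finset.univ.filter (fun j : Fin k => j.val < k - 2)) ⊆
                Finset.univ.image (fun m : Fin (k-2) => (⟨m.val, by omega⟩ : Fin k)) := by
              intro j hj
              rw [Finset.mem_filter] at hj
              refine Finset.mem_image.mpr ⟨⟨j.val, hj.2⟩, Finset.mem_univ _, rfl⟩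
            calc (Finset.univ.filter (fun j : Fin k => j.val < k - 2)).card
                ≤ _ := Finset.card_le_card this
              _ ≤ (Finset.univ : Finset (Fin (k-2))).card := Finset.card_image_le
              _ = k - 2 := by simp
    have hscard : s.card = k := (hcliq s hs).2
    omega
  -- total over both special columns is 2k, forcing each clique to have exactly 2
  have exact2 : ∀ s ∈ P, (s.filter (fun v => v.2 = jA)).card +
      (s.filter (fun v => v.2 = jB)).card = 2 := by
    by_contra hcon
    push_neg at hcon
    obtain ⟨s0, hs0, hne⟩ := hcon
    have hlt : 2 < (s0.filter (fun v => v.2 = jA)).card +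
        (s0.filter (fun v => v.2 = jB)).card := by
      have := geq2 s0 hs0; omega
    have hstrict : ∑ s ∈ P, (2 : ℕ) < ∑ s ∈ P, ((s.filter (fun v => v.2 = jA)).card +
        (s.filter (fun v => v.2 = jB)).card) :=
      Finset.sum_lt_sum (fun s hs => geq2 s hs) ⟨s0, hs0, hlt⟩
    rw [Finset.sum_const, Finset.sum_add_distrib, colsum jA, colsum jB, hcard,
      smul_eq_mul] at hstrict
    omega
  -- parity contradiction on column jA
  have heven : ∀ s ∈ P, (s.filter (fun v => v.2 = jA)).card % 2 = 0 := by
    intro s hs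
    rcases notboth s hs with h | h
    · omega
    · have := exact2 s hs; omega
  have hsum : ∑ s ∈ P, (s.filter (fun v => v.2 = jA)).card = k := colsum jA
  have hmod : k % 2 = 0 := by
    rw [← hsum, Finset.sum_nat_mod]
    rw [Finset.sum_congr rfl heven]
    simp
  rw [Nat.odd_iff] at hko
  omega

end GammaAux

/-- If `k ≥ 3` is even then `Γ_k` can be partitioned into `k` vertex-disjoint copies
of `K_k`, and if `k` is odd it cannot. -/
theorem stmt_7 (k : ℕ) (hk : 3 ≤ k) :
    (Even k → ∃ P : Finset (Finset (Fin k × Fin k)), P.card = k ∧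
      (∀ s ∈ P, (gammaGraph k).IsNClique k s) ∧
      (P : Set (Finset (Fin k × Fin k))).PairwiseDisjoint id ∧
      ∀ v : Fin k × Fin k, ∃ s ∈ P, v ∈ s) ∧
    (Odd k → ¬ ∃ P : Finset (Finset (Fin k × Fin k)), P.card = k ∧
      (∀ s ∈ P, (gammaGraph k).IsNClique k s) ∧
      (P : Set (Finset (Fin k × Fin k))).PairwiseDisjoint id ∧
      ∀ v : Fin k × Fin k, ∃ s ∈ P, v ∈ s) := by
  constructor
  · exact GammaAux.even_part k hk
  · exact GammaAux.odd_part k hk
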